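/- Let $V, W \in \mathbb{R}^{n\times r}$ with $W^TV$ invertible, $\hat A = (W^TV)^{-1}W^TAV$, $\hat B = (W^TV)^{-1}W^TB$, $\hat C = CV$, $\operatorname{Pr} = V(W^TV)^{-1}W^T$. Assume $D \in \mathbb{R}^{r\times r}$ is diagonal, $\tilde C \in \mathbb{R}^{p\times r}$, and $W$ satisfies $-WD - A^TW = C^T\tilde C - e^{A^T\bar T}C^T\tilde C e^{D\bar T}$, with the relevant Kronecker sums invertible. Then the difference between $(\hat B^T\otimes I)[(I\otimes D)+(\hat A^T\otimes I)]^{-1}(e^{\hat A^T\bar T}\hat C^T\otimes e^{D\bar T}\tilde C^T - \hat C^T\otimes\tilde C^T)\operatorname{vec}(I)$ and $(B^T\otimes I)[(I\otimes D)+(A^T\otimes I)]^{-1}(e^{A^T\bar T}C^T\otimes e^{D\bar T}\tilde C^T - C^T\otimes\tilde C^T)\operatorname{vec}(I)$ equals $E_b = (\hat B^T\otimes I)[(I\otimes D)+(\hat A^T\otimes I)]^{-1}(V^T(e^{A^T\operatorname{Pr}^T\bar T} - e^{A^T\bar T})C^T\otimes e^{D\bar T}\tilde C^T)\operatorname{vec}(I)$.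 -/

import Mathlib

open Matrix Kronecker

/-- Column-stacking vectorization of a matrix: `vecC M (j, i) = M i j`. -/
def vecC {a b : Type*} (M : Matrix a b ℝ) : b × a → ℝ := fun q => M q.2 q.1

lemma vecC_sub {a b : Type*} (X Y : Matrix a b ℝ) : vecC (X - Y) = vecC X - vecC Y := rfl

lemma vecC_add {a b : Type*} (X Y : Matrix a b ℝ) : vecC (X + Y) = vecC X + vecC Y := rfl

lemma sub_kron {a b c d : Type*} (X Y : Matrix a b ℝ) (Z : Matrix c d ℝ) :
    (X - Y) ⊗ₖ Z = X ⊗ₖ Z - Y ⊗ₖ Z := by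
  ext ⟨i, j⟩ ⟨k, l⟩
  simp [Matrix.kroneckerMap_apply, sub_mul]

lemma kron_mulVec {a b c d : Type*} [Fintype a] [Fintype b]
    (M : Matrix c b ℝ) (N : Matrix d a ℝ) (X : Matrix a b ℝ) :
    (M ⊗ₖ N) *ᵥ vecC X = vecC (N * X * Mᵀ) := by
  funext q
  obtain ⟨i, j⟩ := q
  simp only [vecC, mulVec, dotProduct, Matrix.mul_apply, kroneckerMap_apply,
    transpose_apply, Fintype.sum_prod_type, Finset.sum_mul, Finset.mul_sum]
  rw [Finset.sum_comm]
  conv_rhs => rw [Finset.sum_comm]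
  exact Finset.sum_congr rfl fun k _ => Finset.sum_congr rfl fun l _ => by ring

section ExpHelpers

attribute [local instance] Matrix.linftyOpNormedAddCommGroup Matrix.linftyOpNormedSpace
  Matrix.linftyOpNormedRing Matrix.linftyOpNormedAlgebra

lemma exp_intertwine {n r : ℕ} (M : Matrix (Fin n) (Fin n) ℝ) (N : Matrix (Fin r) (Fin r) ℝ)
    (P : Matrix (Fin n) (Fin r) ℝ) (h : M * P = P * N) :
    NormedSpace.exp M * P = P * NormedSpace.exp N := by
  have hpow : ∀ k : ℕ, M ^ k * P = P * N ^ k := by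
    intro k
    induction k with
    | zero => simp
    | succ k ih =>
      rw [pow_succ, pow_succ, Matrix.mul_assoc, h, ← Matrix.mul_assoc, ih, Matrix.mul_assoc]
  let L1 : Matrix (Fin n) (Fin n) ℝ →ₗ[ℝ] Matrix (Fin n) (Fin r) ℝ :=
    { toFun := fun X => X * P
      map_add' := fun X Y => Matrix.add_mul X Y P
      map_smul' := fun c X => Matrix.smul_mul c X P }
  let L2 : Matrix (Fin r) (Fin r) ℝ →ₗ[ℝ] Matrix (Fin n) (Fin r) ℝ :=
    { toFun := fun X => P * X
      map_add' := fun X Y => Matrix.mul_add P X Y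
      map_smul' := fun c X => Matrix.mul_smul P c X }
  have hs1 : Summable (fun k : ℕ => (k.factorial : ℝ)⁻¹ • M ^ k) :=
    NormedSpace.expSeries_summable' M
  have hs2 : Summable (fun k : ℕ => (k.factorial : ℝ)⁻¹ • N ^ k) :=
    NormedSpace.expSeries_summable' N
  have e1 : NormedSpace.exp M * P
      = L1.toContinuousLinearMap (∑' k : ℕ, (k.factorial : ℝ)⁻¹ • M ^ k) := by
    rw [NormedSpace.exp_eq_tsum ℝ]; rfl
  have e2 : P * NormedSpace.exp N
      = L2.toContinuousLinearMap (∑' k : ℕ, (k.factorial : ℝ)⁻¹ • N ^ k) := by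
    rw [NormedSpace.exp_eq_tsum ℝ]; rfl
  rw [e1, e2, ContinuousLinearMap.map_tsum _ hs1, ContinuousLinearMap.map_tsum _ hs2]
  congr 1
  funext k
  show ((k.factorial : ℝ)⁻¹ • M ^ k) * P = P * ((k.factorial : ℝ)⁻¹ • N ^ k)
  rw [Matrix.smul_mul, Matrix.mul_smul, hpow]

end ExpHelpers

/-- Error in the second optimality condition for the time-limited IRKA-type algorithm:
the difference between the reduced-order and full-order sides of the `B`-condition
equals `E_b = (B̂ᵀ⊗I)[(I⊗D)+(Âᵀ⊗I)]⁻¹ (Vᵀ(e^{Aᵀ Prᵀ T̄} - e^{AᵀT̄})Cᵀ ⊗ e^{DT̄}C̃ᵀ) vec(I)`. -/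
theorem error_in_B_optimality_condition {n r m p : ℕ}
    (A : Matrix (Fin n) (Fin n) ℝ) (B : Matrix (Fin n) (Fin m) ℝ)
    (C : Matrix (Fin p) (Fin n) ℝ)
    (V W : Matrix (Fin n) (Fin r) ℝ) (hWV : IsUnit (Wᵀ * V))
    (Ah : Matrix (Fin r) (Fin r) ℝ) (hAh : Ah = (Wᵀ * V)⁻¹ * Wᵀ * A * V)
    (Bh : Matrix (Fin r) (Fin m) ℝ) (hBh : Bh = (Wᵀ * V)⁻¹ * Wᵀ * B)
    (Ch : Matrix (Fin p) (Fin r) ℝ) (hCh : Ch = C * V)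
    (Pr : Matrix (Fin n) (Fin n) ℝ) (hPr : Pr = V * (Wᵀ * V)⁻¹ * Wᵀ)
    (d : Fin r → ℝ) (D : Matrix (Fin r) (Fin r) ℝ) (hD : D = Matrix.diagonal d)
    (tC : Matrix (Fin p) (Fin r) ℝ) (T : ℝ)
    (hW : -(W * D) - Aᵀ * W =
      Cᵀ * tC - NormedSpace.exp (T • Aᵀ) * (Cᵀ * tC) * NormedSpace.exp (T • D))
    (hK2 : IsUnit ((1 : Matrix (Fin n) (Fin n) ℝ) ⊗ₖ D + Aᵀ ⊗ₖ (1 : Matrix (Fin r) (Fin r) ℝ)))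
    (hKh2 : IsUnit ((1 : Matrix (Fin r) (Fin r) ℝ) ⊗ₖ D + Ahᵀ ⊗ₖ (1 : Matrix (Fin r) (Fin r) ℝ))) :
    ((Bhᵀ ⊗ₖ (1 : Matrix (Fin r) (Fin r) ℝ)) *
        ((1 : Matrix (Fin r) (Fin r) ℝ) ⊗ₖ D + Ahᵀ ⊗ₖ (1 : Matrix (Fin r) (Fin r) ℝ))⁻¹ *
        ((NormedSpace.exp (T • Ahᵀ) * Chᵀ) ⊗ₖ (NormedSpace.exp (T • D) * tCᵀ)
          - Chᵀ ⊗ₖ tCᵀ)) *ᵥ vecC (1 : Matrix (Fin p) (Fin p) ℝ)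
      - ((Bᵀ ⊗ₖ (1 : Matrix (Fin r) (Fin r) ℝ)) *
          ((1 : Matrix (Fin n) (Fin n) ℝ) ⊗ₖ D + Aᵀ ⊗ₖ (1 : Matrix (Fin r) (Fin r) ℝ))⁻¹ *
          ((NormedSpace.exp (T • Aᵀ) * Cᵀ) ⊗ₖ (NormedSpace.exp (T • D) * tCᵀ)
            - Cᵀ ⊗ₖ tCᵀ)) *ᵥ vecC (1 : Matrix (Fin p) (Fin p) ℝ)
    = ((Bhᵀ ⊗ₖ (1 : Matrix (Fin r) (Fin r) ℝ)) *
        ((1 : Matrix (Fin r) (Fin r) ℝ) ⊗ₖ D + Ahᵀ ⊗ₖ (1 : Matrix (Fin r) (Fin r) ℝ))⁻¹ *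
        ((Vᵀ * (NormedSpace.exp (T • (Aᵀ * Prᵀ)) - NormedSpace.exp (T • Aᵀ)) * Cᵀ)
          ⊗ₖ (NormedSpace.exp (T • D) * tCᵀ)))
        *ᵥ vecC (1 : Matrix (Fin p) (Fin p) ℝ) := by
  have hWVdet : IsUnit (Wᵀ * V).det := (Matrix.isUnit_iff_isUnit_det _).mp hWV
  -- abbreviations
  set EA := NormedSpace.exp (T • Aᵀ) with hEA
  set ED := NormedSpace.exp (T • D) with hED
  set EP := NormedSpace.exp (T • (Aᵀ * Prᵀ)) with hEP
  set EAh := NormedSpace.exp (T • Ahᵀ) with hEAh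
  -- transposed Sylvester equation
  have hDT : Dᵀ = D := by rw [hD, Matrix.diagonal_transpose]
  have hEDT : EDᵀ = ED := by
    rw [hED, ← Matrix.exp_transpose, Matrix.transpose_smul, hDT]
  have hSyl : D * Wᵀ + Wᵀ * A = ED * (tCᵀ * C) * EAᵀ - tCᵀ * C := by
    have h1 := congrArg Matrix.transpose hW
    simp only [Matrix.transpose_sub, Matrix.transpose_neg, Matrix.transpose_mul,
      Matrix.transpose_transpose, hDT, hEDT] at h1
    have h2 : D * Wᵀ + Wᵀ * A = -(-(D * Wᵀ) - Wᵀ * A) := by abel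
    rw [h2, h1, neg_sub]; simp [Matrix.mul_assoc]
  -- basic inverse facts
  have hI : (Wᵀ * V) * (Wᵀ * V)⁻¹ = 1 := Matrix.mul_nonsing_inv _ hWVdet
  -- exp intertwining for the reduced system
  have hInt : EAh * Vᵀ = Vᵀ * EP := by
    apply exp_intertwine
    rw [Matrix.smul_mul, Matrix.mul_smul]
    congr 1
    rw [hAh, hPr]
    simp only [Matrix.transpose_mul, Matrix.transpose_transpose, Matrix.mul_assoc]
  have hExpCh : EAh * Chᵀ = Vᵀ * EP * Cᵀ := by
    rw [hCh, Matrix.transpose_mul, ← Matrix.mul_assoc, hInt]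
  -- abbreviations for the Kronecker matrices
  set e := vecC (1 : Matrix (Fin p) (Fin p) ℝ) with he
  set K := (1 : Matrix (Fin n) (Fin n) ℝ) ⊗ₖ D + Aᵀ ⊗ₖ (1 : Matrix (Fin r) (Fin r) ℝ) with hK
  set Kh := (1 : Matrix (Fin r) (Fin r) ℝ) ⊗ₖ D + Ahᵀ ⊗ₖ (1 : Matrix (Fin r) (Fin r) ℝ) with hKh
  set S := (EA * Cᵀ) ⊗ₖ (ED * tCᵀ) - Cᵀ ⊗ₖ tCᵀ with hS
  set Sh := (EAh * Chᵀ) ⊗ₖ (ED * tCᵀ) - Chᵀ ⊗ₖ tCᵀ with hSh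
  set Se := (Vᵀ * (EP - EA) * Cᵀ) ⊗ₖ (ED * tCᵀ) with hSe
  -- full-order side
  have hKW : K *ᵥ vecC Wᵀ = S *ᵥ e := by
    rw [hK, hS, he, Matrix.add_mulVec, kron_mulVec, kron_mulVec,
      Matrix.sub_mulVec, kron_mulVec, kron_mulVec, ← vecC_add, ← vecC_sub]
    simp only [Matrix.transpose_one, Matrix.mul_one, Matrix.one_mul,
      Matrix.transpose_transpose, Matrix.transpose_mul]
    rw [hSyl]
    simp [Matrix.mul_assoc]
  have hKinv : K⁻¹ *ᵥ (S *ᵥ e) = vecC Wᵀ := by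
    rw [← hKW, Matrix.mulVec_mulVec,
      Matrix.nonsing_inv_mul _ ((Matrix.isUnit_iff_isUnit_det _).mp hK2), Matrix.one_mulVec]
  have hFull : ((Bᵀ ⊗ₖ (1 : Matrix (Fin r) (Fin r) ℝ)) * K⁻¹ * S) *ᵥ e = vecC (Wᵀ * B) := by
    rw [← Matrix.mulVec_mulVec, ← Matrix.mulVec_mulVec, hKinv, kron_mulVec]
    simp [Matrix.transpose_transpose]
  -- reduced-order side
  have hWVAh : (Wᵀ * V) * Ah = Wᵀ * A * V := by
    rw [hAh]
    simp only [← Matrix.mul_assoc]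
    rw [hI, Matrix.one_mul]
  have hWVBh : (Wᵀ * V) * Bh = Wᵀ * B := by
    rw [hBh]
    simp only [← Matrix.mul_assoc]
    rw [hI, Matrix.one_mul]
  have hShSe : Sh - Se = (Vᵀ * EA * Cᵀ) ⊗ₖ (ED * tCᵀ) - (Vᵀ * Cᵀ) ⊗ₖ tCᵀ := by
    have h3 : EAh * Chᵀ - Vᵀ * (EP - EA) * Cᵀ = Vᵀ * EA * Cᵀ := by
      rw [hExpCh, Matrix.mul_sub, Matrix.sub_mul]
      abel
    rw [hSh, hSe]
    rw [show ((EAh * Chᵀ) ⊗ₖ (ED * tCᵀ) - Chᵀ ⊗ₖ tCᵀ) - (Vᵀ * (EP - EA) * Cᵀ) ⊗ₖ (ED * tCᵀ)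
        = ((EAh * Chᵀ - Vᵀ * (EP - EA) * Cᵀ) ⊗ₖ (ED * tCᵀ)) - Chᵀ ⊗ₖ tCᵀ from by
      rw [sub_kron]; abel]
    rw [h3, hCh, Matrix.transpose_mul]
  have hKhW : Kh *ᵥ vecC (Wᵀ * V) = (Sh - Se) *ᵥ e := by
    rw [hShSe, hKh, he, Matrix.add_mulVec, kron_mulVec, kron_mulVec,
      Matrix.sub_mulVec, kron_mulVec, kron_mulVec, ← vecC_add, ← vecC_sub]
    simp only [Matrix.transpose_one, Matrix.mul_one, Matrix.one_mul,
      Matrix.transpose_transpose, Matrix.transpose_mul]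
    simp only [← Matrix.mul_assoc]
    rw [show D * Wᵀ * V + Wᵀ * V * Ah = (D * Wᵀ + Wᵀ * A) * V from by
      rw [hWVAh, Matrix.add_mul]]
    rw [hSyl]
    simp [Matrix.sub_mul, Matrix.mul_assoc]
  have hKhinv : Kh⁻¹ *ᵥ ((Sh - Se) *ᵥ e) = vecC (Wᵀ * V) := by
    rw [← hKhW, Matrix.mulVec_mulVec,
      Matrix.nonsing_inv_mul _ ((Matrix.isUnit_iff_isUnit_det _).mp hKh2), Matrix.one_mulVec]
  have hHat : ((Bhᵀ ⊗ₖ (1 : Matrix (Fin r) (Fin r) ℝ)) * Kh⁻¹ * (Sh - Se)) *ᵥ e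
      = vecC (Wᵀ * B) := by
    rw [← Matrix.mulVec_mulVec, ← Matrix.mulVec_mulVec, hKhinv, kron_mulVec]
    simp only [Matrix.one_mul, Matrix.transpose_transpose]
    rw [hWVBh]
  -- assemble
  have hdiff : ((Bhᵀ ⊗ₖ (1 : Matrix (Fin r) (Fin r) ℝ)) * Kh⁻¹ * Sh) *ᵥ e
      - ((Bhᵀ ⊗ₖ (1 : Matrix (Fin r) (Fin r) ℝ)) * Kh⁻¹ * Se) *ᵥ e
      = ((Bhᵀ ⊗ₖ (1 : Matrix (Fin r) (Fin r) ℝ)) * Kh⁻¹ * (Sh - Se)) *ᵥ e := by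
    rw [Matrix.mul_sub ((Bhᵀ ⊗ₖ (1 : Matrix (Fin r) (Fin r) ℝ)) * Kh⁻¹) Sh Se,
      Matrix.sub_mulVec]
  rw [hFull]
  have hfin := hdiff.trans hHat
  -- goal : hat *ᵥ e - vecC (Wᵀ*B) = E *ᵥ e
  have : ((Bhᵀ ⊗ₖ (1 : Matrix (Fin r) (Fin r) ℝ)) * Kh⁻¹ * Sh) *ᵥ e - vecC (Wᵀ * B)
      = ((Bhᵀ ⊗ₖ (1 : Matrix (Fin r) (Fin r) ℝ)) * Kh⁻¹ * Se) *ᵥ e := by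
    rw [← hfin]; abel
  exact this
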